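/- arXiv:1110.1934 — 4 statements merged into one kernel-verified Lean document; each statement's English description precedes it below -/
import Mathlib

section
/- If B ⊂ ℝ² has H¹(B) > 0 and there exist a line L through the origin and an angle α > 0 such that for every x ∈ B the cone C(x, L, α) = {y ∈ ℝ² : dist(y − x, L) ≤ α|x − y|} meets B only in x, then B is 1-rectifiable. -/
open Metric MeasureTheory Set

/-- If `B ⊂ ℝ²` has `H¹(B) > 0` and there are a line `L` through the origin and `α > 0`
such that for every `x ∈ B` the cone `C(x, L, α)` meets `B` only at `x`, then `B` is
1-rectifiable: up to an `H¹`-null set, `B` is covered by countably many Lipschitz images of `ℝ`. -/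
theorem stmt_7 (B : Set ℂ) (hpos : 0 < μH[1] B)
    (u : ℂ) (hu : ‖u‖ = 1) (α : ℝ) (hα : 0 < α)
    (hcone : ∀ x ∈ B, ∀ y ∈ B,
      Metric.infDist (y - x) ((Submodule.span ℝ {u} : Submodule ℝ ℂ) : Set ℂ) ≤ α * dist x y →
      y = x) :
    ∃ (f : ℕ → ℝ → ℂ) (C : ℕ → NNReal),
      (∀ n, LipschitzWith (C n) (f n)) ∧
      μH[1] (B \ ⋃ n, Set.range (f n)) = 0 := by
  classical
  set φ : ℂ → ℝ := fun z => ((starRingEnd ℂ) u * z).im with hφdef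
  have hcu : (starRingEnd ℂ) u * u = 1 := by
    rw [← Complex.normSq_eq_conj_mul_self, ← Complex.sq_norm, hu]
    norm_num
  -- key: infDist z L ≤ |φ z|
  have key : ∀ z : ℂ,
      Metric.infDist z ((Submodule.span ℝ {u} : Submodule ℝ ℂ) : Set ℂ) ≤ |φ z| := by
    intro z
    set w : ℂ := (starRingEnd ℂ) u * z with hw
    have hmem : ((w.re : ℂ) * u) ∈ ((Submodule.span ℝ {u} : Submodule ℝ ℂ) : Set ℂ) := by
      rw [← Complex.real_smul]
      exact Submodule.smul_mem _ _ (Submodule.mem_span_singleton_self u)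
    have hz : u * w = z := by
      rw [hw, ← mul_assoc, mul_comm u, hcu, one_mul]
    have h2 : dist z ((w.re : ℂ) * u) = |w.im| := by
      rw [dist_eq_norm]
      have hzz : z - (w.re : ℂ) * u = u * ((w.im : ℂ) * Complex.I) := by
        have := Complex.re_add_im w
        calc z - (w.re : ℂ) * u = u * w - (w.re : ℂ) * u := by rw [hz]
          _ = u * ((w.re : ℂ) + (w.im : ℂ) * Complex.I) - (w.re : ℂ) * u := by rw [this]
          _ = u * ((w.im : ℂ) * Complex.I) := by ring
      rw [hzz]
      simp [hu, abs_of_nonneg]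
    calc Metric.infDist z ((Submodule.span ℝ {u} : Submodule ℝ ℂ) : Set ℂ)
        ≤ dist z ((w.re : ℂ) * u) := Metric.infDist_le_dist_of_mem hmem
      _ = |w.im| := h2
      _ = |φ z| := rfl
  -- separation: α * dist x y ≤ |φ y - φ x| on B
  have sep : ∀ x ∈ B, ∀ y ∈ B, α * dist x y ≤ |φ y - φ x| := by
    intro x hx y hy
    have hphi : φ y - φ x = φ (y - x) := by
      simp only [hφdef, mul_sub, Complex.sub_im]
    rcases le_or_gt (α * dist x y) |φ y - φ x| with h | h
    · exact h
    · have : Metric.infDist (y - x) ((Submodule.span ℝ {u} : Submodule ℝ ℂ) : Set ℂ)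
          ≤ α * dist x y := by
        calc _ ≤ |φ (y - x)| := key (y - x)
          _ = |φ y - φ x| := by rw [hphi]
          _ ≤ α * dist x y := h.le
      have hyx := hcone x hx y hy this
      subst hyx
      simp
  set f : ℝ → ℂ := Function.invFunOn φ B with hfdef
  have hfix : ∀ x ∈ B, f (φ x) = x := by
    intro x hx
    have hex : ∃ a ∈ B, φ a = φ x := ⟨x, hx, rfl⟩
    have h1 : f (φ x) ∈ B := Function.invFunOn_mem hex
    have h2 : φ (f (φ x)) = φ x := Function.invFunOn_eq hex
    have := sep x hx (f (φ x)) h1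
    rw [h2, sub_self, abs_zero] at this
    have hd : dist x (f (φ x)) ≤ 0 := by nlinarith [dist_nonneg (x := x) (y := f (φ x))]
    exact (dist_eq_zero.mp (le_antisymm hd dist_nonneg)).symm
  set K : NNReal := Real.toNNReal α⁻¹ with hK
  have hKc : (K : ℝ) = α⁻¹ := Real.coe_toNNReal _ (by positivity)
  have hlip : LipschitzOnWith K f (φ '' B) := by
    rw [lipschitzOnWith_iff_dist_le_mul]
    rintro s ⟨x, hx, rfl⟩ t ⟨y, hy, rfl⟩
    rw [hfix x hx, hfix y hy]
    have h1 := sep x hx y hy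
    have h2 : |φ y - φ x| = dist (φ x) (φ y) := by
      rw [Real.dist_eq, abs_sub_comm]
    rw [hKc]
    rw [h2] at h1
    calc dist x y = α⁻¹ * (α * dist x y) := by field_simp
      _ ≤ α⁻¹ * dist (φ x) (φ y) := by
          apply mul_le_mul_of_nonneg_left h1 (by positivity)
  -- extend real and imaginary parts
  have hlip1 : LipschitzOnWith K (fun t => (f t).re) (φ '' B) := by
    rw [lipschitzOnWith_iff_dist_le_mul] at hlip ⊢
    intro s hs t ht
    calc dist (f s).re (f t).re ≤ dist (f s) (f t) := by
          rw [Real.dist_eq, Complex.dist_eq, ← Complex.sub_re]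
          exact Complex.abs_re_le_norm _
      _ ≤ K * dist s t := hlip s hs t ht
  have hlip2 : LipschitzOnWith K (fun t => (f t).im) (φ '' B) := by
    rw [lipschitzOnWith_iff_dist_le_mul] at hlip ⊢
    intro s hs t ht
    calc dist (f s).im (f t).im ≤ dist (f s) (f t) := by
          rw [Real.dist_eq, Complex.dist_eq, ← Complex.sub_im]
          exact Complex.abs_im_le_norm _
      _ ≤ K * dist s t := hlip s hs t ht
  obtain ⟨g₁, hg₁, heq₁⟩ := hlip1.extend_real
  obtain ⟨g₂, hg₂, heq₂⟩ := hlip2.extend_real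
  set g : ℝ → ℂ := fun t => (g₁ t : ℂ) + (g₂ t : ℂ) * Complex.I with hgdef
  have hglip : LipschitzWith (K + K) g := by
    rw [lipschitzWith_iff_dist_le_mul]
    intro s t
    have h1 : dist (g₁ s) (g₁ t) ≤ K * dist s t := hg₁.dist_le_mul s t
    have h2 : dist (g₂ s) (g₂ t) ≤ K * dist s t := hg₂.dist_le_mul s t
    have hsub : g s - g t = ((g₁ s - g₁ t : ℝ) : ℂ) + ((g₂ s - g₂ t : ℝ) : ℂ) * Complex.I := by
      push_cast
      ring
    calc dist (g s) (g t) = ‖g s - g t‖ := Complex.dist_eq _ _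
      _ ≤ |(g s - g t).re| + |(g s - g t).im| := Complex.norm_le_abs_re_add_abs_im _
      _ = |g₁ s - g₁ t| + |g₂ s - g₂ t| := by rw [hsub]; simp
      _ ≤ K * dist s t + K * dist s t := by
          rw [Real.dist_eq] at h1 h2; exact add_le_add h1 h2
      _ = ↑(K + K) * dist s t := by push_cast; ring
  have hcov : B ⊆ Set.range g := by
    intro x hx
    refine ⟨φ x, ?_⟩
    have hmem : φ x ∈ φ '' B := ⟨x, hx, rfl⟩
    have e1 : g₁ (φ x) = (f (φ x)).re := (heq₁ hmem).symm
    have e2 : g₂ (φ x) = (f (φ x)).im := (heq₂ hmem).symm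
    rw [hgdef]
    simp only [e1, e2, hfix x hx, Complex.re_add_im]
  refine ⟨fun _ => g, fun _ => K + K, fun _ => hglip, ?_⟩
  have : B \ ⋃ _ : ℕ, Set.range g = ∅ := by
    rw [Set.diff_eq_empty]
    exact hcov.trans (Set.subset_iUnion (fun _ : ℕ => Set.range g) 0)
  rw [this, measure_empty]
end

section
/- Let K ⊂ ℝ² be the attractor of a finite system of contractive similitudes {ψ_1, …, ψ_q}, all with rational rotation angles, and assume ψ_{j₀}(0) = 0 for some j₀ (i.e., 0 is a fixed point of one of the maps). Then the set K₀ of points of the form ψ_{i₁} ∘ ⋯ ∘ ψ_{i_k}(0), where the composition has type [Id, Id], is dense in K. -/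
open Metric Set

noncomputable def ee (a : ℚ) : ℂ := Complex.exp (2 * Real.pi * a * Complex.I)

lemma ee_add (a c : ℚ) : ee a * ee c = ee (a + c) := by
  rw [ee, ee, ee, ← Complex.exp_add]; congr 1; push_cast; ring

lemma ee_zero : ee 0 = 1 := by simp [ee]

lemma ee_int (n : ℤ) : ee n = 1 := by
  rw [ee, show (2 * (Real.pi:ℂ) * ((n:ℚ):ℂ) * Complex.I) = (n:ℂ) * (2 * Real.pi * Complex.I) by push_cast; ring]
  exact Complex.exp_int_mul_two_pi_mul_I n

lemma ee_conj (a : ℚ) : (starRingEnd ℂ) (ee a) = ee (-a) := by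
  rw [ee, ee, ← Complex.exp_conj,
    show (2 * (Real.pi:ℂ) * ((a:ℚ):ℂ) * Complex.I) = ((2*Real.pi*(a:ℝ) : ℝ):ℂ) * Complex.I by
      push_cast; ring]
  rw [map_mul, Complex.conj_ofReal, Complex.conj_I]
  congr 1; push_cast; ring

def Sim (f : ℂ → ℂ) : Prop := ∃ (ρ : ℝ) (a : ℚ) (s : Bool) (w : ℂ), 0 < ρ ∧
  ∀ z, f z = (ρ:ℂ) * ee a * (if s then (starRingEnd ℂ) z else z) + w

lemma Sim.id : Sim id := by
  exact ⟨1, 0, false, 0, one_pos, fun z => by simp [ee_zero]⟩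

lemma Sim.comp {f g : ℂ → ℂ} (hf : Sim f) (hg : Sim g) : Sim (f ∘ g) := by
  obtain ⟨ρf, af, sf, wf, hρf, hfz⟩ := hf
  obtain ⟨ρg, ag, sg, wg, hρg, hgz⟩ := hg
  cases sf with
  | false =>
    refine ⟨ρf * ρg, af + ag, sg, (ρf:ℂ) * ee af * wg + wf, mul_pos hρf hρg, fun z => ?_⟩
    simp only [Function.comp_apply, hfz, hgz, if_false, ← ee_add]
    push_cast; ring
  | true =>
    refine ⟨ρf * ρg, af - ag, !sg, (ρf:ℂ) * ee af * (starRingEnd ℂ) wg + wf,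
      mul_pos hρf hρg, fun z => ?_⟩
    simp only [Function.comp_apply, hfz, hgz, if_true]
    rw [show af - ag = af + (-ag) by ring, ← ee_add, ← ee_conj]
    cases sg <;>
      simp [map_add, map_mul, Complex.conj_conj, Complex.conj_ofReal] <;> push_cast <;> ring

lemma sim_pow_form {g : ℂ → ℂ} {c : ℝ} {a : ℚ} {wg : ℂ}
    (hc : 0 < c) (hg : ∀ z, g z = (c:ℂ) * ee a * z + wg) :
    ∀ n : ℕ, ∃ W : ℂ, ∀ z, g^[n] z = ((c^n : ℝ):ℂ) * ee (n * a) * z + W := by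
  intro n
  induction n with
  | zero => exact ⟨0, fun z => by simp [ee_zero]⟩
  | succ n ih =>
    obtain ⟨W, hW⟩ := ih
    refine ⟨(c:ℂ) * ee a * W + wg, fun z => ?_⟩
    rw [Function.iterate_succ_apply', hW, hg]
    rw [show ((n+1 : ℕ):ℚ) * a = a + (n:ℚ) * a by push_cast; ring, ← ee_add]
    push_cast; ring

lemma sim_iterate {f : ℂ → ℂ} (hf : Sim f) :
    ∃ n, 1 ≤ n ∧ ∃ (c : ℝ) (w' : ℂ), 0 < c ∧ ∀ z, f^[n] z = (c:ℂ) * z + w' := by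
  have h2 : Sim (f ∘ f) := hf.comp hf
  -- f ∘ f has no conjugation
  obtain ⟨ρf, af, sf, wf, hρf, hfz⟩ := hf
  have : ∃ (c : ℝ) (a : ℚ) (W : ℂ), 0 < c ∧ ∀ z, f (f z) = (c:ℂ) * ee a * z + W := by
    cases sf with
    | false =>
      refine ⟨ρf * ρf, af + af, (ρf:ℂ) * ee af * wf + wf, mul_pos hρf hρf, fun z => ?_⟩
      simp only [hfz, if_false, ← ee_add]; push_cast; ring
    | true =>
      refine ⟨ρf * ρf, 0, (ρf:ℂ) * ee af * (starRingEnd ℂ) wf + wf, mul_pos hρf hρf, fun z => ?_⟩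
      simp only [hfz, if_true]
      rw [show (0:ℚ) = af + (-af) by ring, ← ee_add, ← ee_conj]
      simp only [map_add, map_mul, Complex.conj_conj, Complex.conj_ofReal]
      push_cast; ring
  obtain ⟨c, a, W, hc, hW⟩ := this
  obtain ⟨W2, hW2⟩ := sim_pow_form (g := f ∘ f) hc (fun z => hW z) a.den
  refine ⟨2 * a.den, by have := a.pos; omega, c ^ a.den, W2, pow_pos hc _, fun z => ?_⟩
  have hit : f^[2 * a.den] = (f ∘ f)^[a.den] := by
    rw [Function.iterate_mul]
    rfl
  rw [hit, hW2]
  have hden : ((a.den : ℚ)) * a = (a.num : ℚ) := by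
    rw [mul_comm, Rat.mul_den_eq_num]
  rw [hden, ee_int]
  ring

def Phi {q : ℕ} (ψ : Fin q → ℂ → ℂ) (l : List (Fin q)) : ℂ → ℂ :=
  l.foldr (fun i f => ψ i ∘ f) id

lemma Phi_nil {q : ℕ} (ψ : Fin q → ℂ → ℂ) : Phi ψ [] = id := rfl

lemma Phi_cons {q : ℕ} (ψ : Fin q → ℂ → ℂ) (i : Fin q) (l : List (Fin q)) :
    Phi ψ (i :: l) = ψ i ∘ Phi ψ l := rfl

lemma Phi_append {q : ℕ} (ψ : Fin q → ℂ → ℂ) (l1 l2 : List (Fin q)) :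
    Phi ψ (l1 ++ l2) = Phi ψ l1 ∘ Phi ψ l2 := by
  induction l1 with
  | nil => rfl
  | cons i l ih => rw [List.cons_append, Phi_cons, Phi_cons, ih]; rfl

lemma Phi_replicate {q : ℕ} (ψ : Fin q → ℂ → ℂ) (l : List (Fin q)) (n : ℕ) :
    Phi ψ (List.replicate n l).flatten = (Phi ψ l)^[n] := by
  induction n with
  | zero => rfl
  | succ n ih =>
    rw [List.replicate_succ, List.flatten_cons, Phi_append, ih, Function.iterate_succ']

lemma Phi_dist {q : ℕ} (ψ : Fin q → ℂ → ℂ) (ρ : ℝ) (hρ0 : 0 ≤ ρ)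
    (h : ∀ j z z', dist (ψ j z) (ψ j z') ≤ ρ * dist z z') (l : List (Fin q)) (z z' : ℂ) :
    dist (Phi ψ l z) (Phi ψ l z') ≤ ρ ^ l.length * dist z z' := by
  induction l with
  | nil => simp [Phi_nil]
  | cons i l ih =>
    rw [Phi_cons]
    calc dist (ψ i (Phi ψ l z)) (ψ i (Phi ψ l z'))
        ≤ ρ * dist (Phi ψ l z) (Phi ψ l z') := h i _ _
      _ ≤ ρ * (ρ ^ l.length * dist z z') := mul_le_mul_of_nonneg_left ih hρ0
      _ = ρ ^ (i :: l).length * dist z z' := by rw [List.length_cons, pow_succ]; ring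


/-- If `K` is the attractor of similitudes `ψ_j` with rational rotation angles and `0` is a
fixed point of one of the maps, then the set `K₀` of points `ψ_{i₁} ∘ ⋯ ∘ ψ_{i_k}(0)` for
words whose composition has type `[Id, Id]` is dense in `K`. -/
theorem stmt_8 (q : ℕ) (hq : 0 < q) (r : Fin q → ℝ) (θ : Fin q → ℝ) (b : Fin q → Bool)
    (w : Fin q → ℂ) (ψ : Fin q → ℂ → ℂ)
    (hr : ∀ j, r j ∈ Set.Ioo (0:ℝ) 1)
    (hθ : ∀ j, ∃ a : ℚ, θ j = (a : ℝ))
    (hψ : ∀ j z, ψ j z = (r j : ℂ) *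
        (Complex.exp (2 * Real.pi * (θ j) * Complex.I) *
          (if b j then (starRingEnd ℂ) z else z)) + w j)
    (K : Set ℂ) (hKc : IsCompact K) (hKne : K.Nonempty) (hattr : K = ⋃ j, ψ j '' K)
    (j₀ : Fin q) (hfix : ψ j₀ 0 = 0) :
    K ⊆ closure {x : ℂ | ∃ l : List (Fin q), l ≠ [] ∧
      (∃ (c : ℝ) (w' : ℂ), 0 < c ∧
        ∀ z, (l.foldr (fun i f => ψ i ∘ f) id) z = (c : ℂ) * z + w') ∧
      x = (l.foldr (fun i f => ψ i ∘ f) id) 0} := by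
  intro x hx
  -- each ψ j is a similitude in the sense of `Sim`
  have hSim : ∀ j, Sim (ψ j) := by
    intro j
    obtain ⟨a, ha⟩ := hθ j
    refine ⟨r j, a, b j, w j, (hr j).1, fun z => ?_⟩
    rw [hψ, ha]
    have hE : Complex.exp (2 * Real.pi * ((a:ℝ):ℂ) * Complex.I) = ee a := by
      rw [ee]; norm_cast
    rw [hE, mul_assoc]
  -- each ψ j scales distances by r j
  have hdist : ∀ j z z', dist (ψ j z) (ψ j z') = r j * dist z z' := by
    intro j z z'
    rw [Complex.dist_eq, Complex.dist_eq, hψ, hψ]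
    have h1 : (r j : ℂ) * (Complex.exp (2 * Real.pi * (θ j) * Complex.I) *
          (if b j then (starRingEnd ℂ) z else z)) + w j -
        ((r j : ℂ) * (Complex.exp (2 * Real.pi * (θ j) * Complex.I) *
          (if b j then (starRingEnd ℂ) z' else z')) + w j) =
        (r j : ℂ) * Complex.exp (2 * Real.pi * (θ j) * Complex.I) *
          ((if b j then (starRingEnd ℂ) z else z) - (if b j then (starRingEnd ℂ) z' else z')) := by
      ring
    rw [h1, norm_mul, norm_mul]
    have hE : ‖Complex.exp (2 * Real.pi * (θ j) * Complex.I)‖ = 1 := by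
      rw [show (2 * Real.pi * ((θ j : ℝ):ℂ) * Complex.I) = ((2 * Real.pi * θ j : ℝ):ℂ) * Complex.I
        by push_cast; ring]
      exact Complex.norm_exp_ofReal_mul_I _
    have hσ : ‖(if b j then (starRingEnd ℂ) z else z) -
        (if b j then (starRingEnd ℂ) z' else z')‖ = ‖z - z'‖ := by
      cases hb : b j <;> simp [← map_sub]
    rw [hE, hσ, Complex.norm_real, Real.norm_eq_abs, abs_of_pos (hr j).1, mul_one]
  -- each ψ j maps K into itself
  have hmaps : ∀ j, ψ j '' K ⊆ K := fun j => (subset_iUnion (fun j => ψ j '' K) j).trans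
    hattr.symm.subset
  -- words map K into itself
  have hΦK : ∀ l : List (Fin q), ∀ z ∈ K, Phi ψ l z ∈ K := by
    intro l
    induction l with
    | nil => intro z hz; exact hz
    | cons i l ih => intro z hz; exact hmaps i ⟨_, ih z hz, rfl⟩
  -- 0 ∈ K
  have hzero : (0:ℂ) ∈ K := by
    obtain ⟨x0, hx0⟩ := hKne
    have huK : ∀ n, (ψ j₀)^[n] x0 ∈ K := by
      intro n
      induction n with
      | zero => exact hx0
      | succ n ih => rw [Function.iterate_succ_apply']; exact hmaps j₀ ⟨_, ih, rfl⟩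
    have hud : ∀ n, dist ((ψ j₀)^[n] x0) 0 = (r j₀)^n * dist x0 0 := by
      intro n
      induction n with
      | zero => simp
      | succ n ih =>
        rw [Function.iterate_succ_apply', ← hfix, hdist, hfix, ih, pow_succ]; ring
    have ht : Filter.Tendsto (fun n => (ψ j₀)^[n] x0) Filter.atTop (nhds 0) := by
      rw [tendsto_iff_dist_tendsto_zero]
      simp only [hud]
      have := (tendsto_pow_atTop_nhds_zero_of_lt_one (le_of_lt (hr j₀).1) (hr j₀).2).mul_const
        (dist x0 0)
      simpa using this
    exact hKc.isClosed.mem_of_tendsto ht (Filter.Eventually.of_forall huK)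
  -- a uniform contraction ratio
  haveI : Nonempty (Fin q) := ⟨⟨0, hq⟩⟩
  obtain ⟨jm, hjm⟩ := Finite.exists_max r
  set ρ : ℝ := r jm with hρdef
  have hρ0 : 0 ≤ ρ := le_of_lt (hr jm).1
  have hρ1 : ρ < 1 := (hr jm).2
  have hψρ : ∀ j z z', dist (ψ j z) (ψ j z') ≤ ρ * dist z z' := fun j z z' => by
    rw [hdist]; exact mul_le_mul_of_nonneg_right (hjm j) dist_nonneg
  -- cover: every point of K is in the image of a word of any given length
  have hcover : ∀ k : ℕ, ∀ x ∈ K, ∃ l : List (Fin q), l.length = k ∧ ∃ y ∈ K, x = Phi ψ l y := by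
    intro k
    induction k with
    | zero => intro x hx; exact ⟨[], rfl, x, hx, rfl⟩
    | succ k ih =>
      intro x hx
      rw [hattr] at hx
      obtain ⟨j, ⟨y, hy, rfl⟩⟩ := mem_iUnion.1 hx
      obtain ⟨l, hlen, y', hy', rfl⟩ := ih y hy
      exact ⟨j :: l, by simp [hlen], y', hy', rfl⟩
  -- main argument
  rw [Metric.mem_closure_iff]
  intro ε hε
  set D := Metric.diam K with hDdef
  have hD0 : 0 ≤ D := Metric.diam_nonneg
  -- choose k with ρ^k * D < ε and 1 ≤ k
  have htend : Filter.Tendsto (fun n => ρ ^ n * D) Filter.atTop (nhds 0) := by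
    have := (tendsto_pow_atTop_nhds_zero_of_lt_one hρ0 hρ1).mul_const D
    simpa using this
  have hev : ∀ᶠ n in Filter.atTop, ρ ^ n * D < ε :=
    htend.eventually_lt_const hε
  obtain ⟨k, hkε, hk1⟩ := (hev.and (Filter.eventually_ge_atTop 1)).exists
  obtain ⟨l, hlen, y, hyK, hxy⟩ := hcover k x hx
  have hlne : l ≠ [] := by
    intro h; rw [h] at hlen; simp at hlen; omega
  -- the word composition is a similitude
  have hΦSim : ∀ l' : List (Fin q), Sim (Phi ψ l') := by
    intro l'
    induction l' with
    | nil => exact Sim.id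
    | cons i l' ih => exact (hSim i).comp ih
  obtain ⟨n, hn1, c, w', hc, hform⟩ := sim_iterate (hΦSim l)
  obtain ⟨m, rfl⟩ : ∃ m, n = m + 1 := ⟨n - 1, by omega⟩
  set L := (List.replicate (m + 1) l).flatten with hLdef
  have hL : L = l ++ (List.replicate m l).flatten := by
    rw [hLdef, List.replicate_succ, List.flatten_cons]
  have hLne : L ≠ [] := by
    rw [hL]; exact fun h => hlne (List.append_eq_nil_iff.1 h).1
  have hΦL : Phi ψ L = (Phi ψ l)^[m + 1] := Phi_replicate ψ l (m + 1)
  -- the candidate point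
  have hformL : ∀ z, List.foldr (fun i f => ψ i ∘ f) id L z = (c:ℂ) * z + w' := by
    intro z
    show Phi ψ L z = (c:ℂ) * z + w'
    rw [hΦL]; exact hform z
  refine ⟨Phi ψ L 0, ⟨L, hLne, ⟨c, w', hc, hformL⟩, rfl⟩, ?_⟩
  -- distance estimate
  have hz0K : Phi ψ ((List.replicate m l).flatten) 0 ∈ K := hΦK _ 0 hzero
  have hL0 : Phi ψ L 0 = Phi ψ l (Phi ψ ((List.replicate m l).flatten) 0) := by
    rw [hL, Phi_append]; rfl
  rw [hxy, hL0]
  calc dist (Phi ψ l y) (Phi ψ l (Phi ψ ((List.replicate m l).flatten) 0))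
      ≤ ρ ^ l.length * dist y (Phi ψ ((List.replicate m l).flatten) 0) :=
        Phi_dist ψ ρ hρ0 hψρ l _ _
    _ ≤ ρ ^ k * D := by
        rw [hlen]
        exact mul_le_mul_of_nonneg_left
          (Metric.dist_le_diam_of_mem hKc.isBounded hyK hz0K) (pow_nonneg hρ0 k)
    _ < ε := hkε
end

section
/- Let ψ be a contractive similitude of ℝ² with rational rotation type, contraction ratio r ≤ ε, and ψ(0) ∈ B(x, ε) for some x, and suppose ψ maps the closed unit ball into itself. Then there exists n ∈ ℕ such that the n-fold iterate ψⁿ has type [Id, Id] and ψⁿ(0) ∈ B(x, 2ε). -/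
open Metric Set

/-- If `ψ` is a contractive similitude of rational rotation type with ratio `r ≤ ε`,
`ψ(0) ∈ B(x, ε)`, and `ψ` maps the closed unit ball into itself, then some iterate
`ψⁿ` has type `[Id, Id]` and satisfies `ψⁿ(0) ∈ B(x, 2ε)`. -/
theorem stmt_9 (r θ : ℝ) (b : Bool) (w : ℂ) (ψ : ℂ → ℂ)
    (hr : r ∈ Set.Ioo (0:ℝ) 1) (hθ : ∃ a : ℚ, θ = (a : ℝ))
    (hψ : ∀ z, ψ z = (r : ℂ) *
        (Complex.exp (2 * Real.pi * θ * Complex.I) *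
          (if b then (starRingEnd ℂ) z else z)) + w)
    (ε : ℝ) (hε : 0 < ε) (hrε : r ≤ ε) (x : ℂ) (hx : ψ 0 ∈ closedBall x ε)
    (hmap : ψ '' closedBall (0:ℂ) 1 ⊆ closedBall (0:ℂ) 1) :
    ∃ n : ℕ, 0 < n ∧
      (∃ (c : ℝ) (w' : ℂ), 0 < c ∧ ∀ z, ψ^[n] z = (c : ℂ) * z + w') ∧
      ψ^[n] 0 ∈ closedBall x (2 * ε) := by
  obtain ⟨a, rfl⟩ := hθ
  obtain ⟨hr0, hr1⟩ := hr
  set e : ℂ := Complex.exp (2 * Real.pi * ((a:ℝ):ℂ) * Complex.I) with he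
  have habs_e : ‖e‖ = 1 := by
    rw [he, Complex.norm_exp]
    simp
  have hdist : ∀ z z', dist (ψ z) (ψ z') = r * dist z z' := by
    intro z z'
    rw [hψ, hψ, Complex.dist_eq, Complex.dist_eq]
    cases b <;> simp only [if_true, if_false, Bool.false_eq_true]
    · have : (r:ℂ) * (e * z) + w - ((r:ℂ) * (e * z') + w) = (r:ℂ) * e * (z - z') := by ring
      rw [this, norm_mul, norm_mul, Complex.norm_real, Real.norm_eq_abs, habs_e, abs_of_pos hr0]
      ring
    · have : (r:ℂ) * (e * (starRingEnd ℂ) z) + w - ((r:ℂ) * (e * (starRingEnd ℂ) z') + w)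
          = (r:ℂ) * e * ((starRingEnd ℂ) (z - z')) := by
        rw [map_sub]; ring
      rw [this, norm_mul, norm_mul, Complex.norm_real, Real.norm_eq_abs, habs_e, Complex.norm_conj,
        abs_of_pos hr0]
      ring
  have hball : ∀ k, ψ^[k] 0 ∈ closedBall (0:ℂ) 1 := by
    intro k
    induction k with
    | zero => simp
    | succ k ih =>
      rw [Function.iterate_succ_apply']
      exact hmap ⟨_, ih, rfl⟩
  -- final ball membership for any n ≥ 1
  have hfinal : ∀ m : ℕ, ψ^[m+1] 0 ∈ closedBall x (2 * ε) := by
    intro m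
    have h1 : dist (ψ^[m+1] 0) (ψ 0) ≤ ε := by
      rw [Function.iterate_succ_apply', hdist]
      have := hball m
      rw [mem_closedBall] at this
      calc r * dist (ψ^[m] 0) 0 ≤ r * 1 := by
            apply mul_le_mul_of_nonneg_left this hr0.le
        _ = r := mul_one r
        _ ≤ ε := hrε
    rw [mem_closedBall]
    calc dist (ψ^[m+1] 0) x ≤ dist (ψ^[m+1] 0) (ψ 0) + dist (ψ 0) x :=
          dist_triangle _ _ _
      _ ≤ ε + ε := add_le_add h1 hx
      _ = 2 * ε := by ring
  cases b with
  | true =>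
    refine ⟨2, two_pos, ⟨r^2, (r:ℂ) * e * (starRingEnd ℂ) w + w, pow_pos hr0 2, ?_⟩,
      hfinal 1⟩
    intro z
    have hee : e * (starRingEnd ℂ) e = 1 := by
      rw [Complex.mul_conj, ← Complex.sq_norm, habs_e]
      norm_num
    rw [show (2:ℕ) = 1 + 1 from rfl, Function.iterate_add_apply,
      Function.iterate_one, hψ, hψ]
    simp only [if_true]
    rw [map_add, map_mul, map_mul, Complex.conj_ofReal, Complex.conj_conj]
    push_cast
    have : (r:ℂ) * (e * ((r:ℂ) * ((starRingEnd ℂ) e * z) + (starRingEnd ℂ) w)) + w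
        = (r:ℂ)^2 * (e * (starRingEnd ℂ) e) * z + ((r:ℂ) * e * (starRingEnd ℂ) w + w) := by
      ring
    rw [this, hee]
    ring
  | false =>
    -- iterate formula
    have hiter : ∀ k : ℕ, ∃ w' : ℂ, ∀ z, ψ^[k] z = ((r:ℂ))^k * e^k * z + w' := by
      intro k
      induction k with
      | zero => exact ⟨0, by simp⟩
      | succ k ih =>
        obtain ⟨w', hw'⟩ := ih
        refine ⟨(r:ℂ)^k * e^k * w + w', fun z => ?_⟩
        rw [Function.iterate_succ_apply, hw', hψ]
        simp only [Bool.false_eq_true, if_false]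
        ring
    set n : ℕ := a.den with hn
    have hen : e^n = 1 := by
      rw [he, ← Complex.exp_nat_mul]
      have : (n:ℂ) * (2 * Real.pi * ((a:ℝ):ℂ) * Complex.I)
          = (a.num : ℤ) * (2 * Real.pi * Complex.I) := by
        have hna : (n:ℂ) * ((a:ℝ):ℂ) = (a.num : ℂ) := by
          push_cast
          rw [hn]
          push_cast
          rw [mul_comm]
          exact_mod_cast congrArg (Rat.cast : ℚ → ℂ) (Rat.mul_den_eq_num a)
        calc (n:ℂ) * (2 * Real.pi * ((a:ℝ):ℂ) * Complex.I)
            = ((n:ℂ) * ((a:ℝ):ℂ)) * (2 * Real.pi * Complex.I) := by ring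
          _ = (a.num : ℂ) * (2 * Real.pi * Complex.I) := by rw [hna]
          _ = _ := by push_cast; ring
      rw [this, Complex.exp_int_mul_two_pi_mul_I]
    obtain ⟨w', hw'⟩ := hiter n
    have hnpos : 0 < n := a.pos
    obtain ⟨m, hm⟩ : ∃ m, n = m + 1 := ⟨n - 1, (Nat.succ_pred_eq_of_pos hnpos).symm⟩
    refine ⟨n, hnpos, ⟨r^n, w', pow_pos hr0 n, fun z => ?_⟩, hm ▸ hfinal m⟩
    rw [hw', hen]
    push_cast
    ring
end

section
/- Fix α > 0 and let B₀ be a closed ball, e a unit vector, ξ a unit vector orthogonal to e, and L_ξ the line through the origin in direction ξ. Then there exists r_α > 0 such that for every x on the line through the center of B₀ in direction e with distance at least r_α from B₀, and for every y ∈ B₀, the circle S(x, |x−y|) intersected with B₀ is contained in the cone C(y, L_ξ, α) = {z : dist(z−y, L_ξ) ≤ α|z−y|}. -/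
open Metric Set

lemma aux_arith (α R t ur ui pr pi qr qi A : ℝ) (hα : 0 < α) (hR : 0 < R)
    (hz2 : pr^2 + pi^2 ≤ R^2) (hy2 : qr^2 + qi^2 ≤ R^2)
    (hkey : A * (2 * t) = ur * (pr + qr) + ui * (pi + qi))
    (ht : R / α + 1 ≤ |t|) :
    A^2 ≤ α^2 * (ur^2 + ui^2) := by
  have hN : (0:ℝ) ≤ ur^2 + ui^2 := by positivity
  have h1 : R ≤ α * |t| := by
    have h := mul_le_mul_of_nonneg_left ht hα.le
    rw [mul_add, mul_div_cancel₀ R hα.ne'] at h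
    linarith
  have hαt : R^2 ≤ α^2 * t^2 := by
    calc R^2 ≤ (α * |t|)^2 := pow_le_pow_left₀ hR.le h1 2
      _ = α^2 * t^2 := by rw [mul_pow, sq_abs]
  have hv : (pr + qr)^2 + (pi + qi)^2 ≤ 4 * R^2 := by
    nlinarith [sq_nonneg (pr - qr), sq_nonneg (pi - qi)]
  have hcs : (ur * (pr + qr) + ui * (pi + qi))^2
      ≤ (ur^2 + ui^2) * ((pr + qr)^2 + (pi + qi)^2) := by
    nlinarith [sq_nonneg (ur * (pi + qi) - ui * (pr + qr))]
  have hkey2 : (A * (2 * t))^2 = (ur * (pr + qr) + ui * (pi + qi))^2 := by rw [hkey]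
  have hNV : (ur^2 + ui^2) * ((pr + qr)^2 + (pi + qi)^2) ≤ (ur^2 + ui^2) * (4 * R^2) :=
    mul_le_mul_of_nonneg_left hv hN
  have hAb : A^2 * t^2 ≤ R^2 * (ur^2 + ui^2) := by nlinarith [hkey2, hcs, hNV]
  have h2 : A^2 * R^2 ≤ A^2 * (α^2 * t^2) := mul_le_mul_of_nonneg_left hαt (sq_nonneg _)
  have h3 : α^2 * (A^2 * t^2) ≤ α^2 * (R^2 * (ur^2 + ui^2)) :=
    mul_le_mul_of_nonneg_left hAb (sq_nonneg α)
  have h4 : R^2 * A^2 ≤ R^2 * (α^2 * (ur^2 + ui^2)) := by nlinarith [h2, h3]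
  exact le_of_mul_le_mul_left h4 (by positivity)

set_option maxHeartbeats 400000 in
/-- For a closed ball `B₀`, a unit vector `e`, and `ξ ⊥ e`, there is `r_α > 0` such that
for every point `x` on the line through the center of `B₀` in direction `e` at distance at
least `r_α` from `B₀`, and every `y ∈ B₀`, the circle `S(x, |x-y|)` meets `B₀` only inside
the cone `C(y, L_ξ, α)`. -/
theorem stmt_12 (α : ℝ) (hα : 0 < α) (c : ℂ) (R : ℝ) (hR : 0 < R)
    (e ξ : ℂ) (he : ‖e‖ = 1) (hξ : ‖ξ‖ = 1)
    (horth : (e * (starRingEnd ℂ) ξ).re = 0) :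
    ∃ rα : ℝ, 0 < rα ∧ ∀ t : ℝ, ∀ x : ℂ, x = c + (t : ℂ) * e →
      rα ≤ Metric.infDist x (closedBall c R) →
      ∀ y ∈ closedBall c R, ∀ z ∈ sphere x (dist x y) ∩ closedBall c R,
        Metric.infDist (z - y) ((Submodule.span ℝ {ξ} : Submodule ℝ ℂ) : Set ℂ)
          ≤ α * dist z y := by
  have hns : ∀ w : ℂ, ‖w‖^2 = w.re^2 + w.im^2 := fun w => by
    rw [Complex.sq_norm, Complex.normSq_apply]; ring
  have F1 : e.re^2 + e.im^2 = 1 := by have := hns e; rw [he] at this; linarith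
  have F2 : ξ.re^2 + ξ.im^2 = 1 := by have := hns ξ; rw [hξ] at this; linarith
  have F3 : e.re * ξ.re + e.im * ξ.im = 0 := by
    have h := horth
    simp only [Complex.mul_re, Complex.conj_re, Complex.conj_im, RingHom.coe_coe] at h
    nlinarith [h]
  have ha2 : e.re^2 + ξ.re^2 = 1 := by
    linear_combination (1 - ξ.re^2) * F1 + e.im^2 * F2 + (e.re*ξ.re - e.im*ξ.im) * F3
  have hb2 : e.im^2 + ξ.im^2 = 1 := by
    linear_combination (1 - ξ.im^2) * F1 + e.re^2 * F2 + (e.im*ξ.im - e.re*ξ.re) * F3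
  have hab : e.re * e.im + ξ.re * ξ.im = 0 := by
    linear_combination (-(ξ.re*ξ.im)) * F1 + (-(e.re*e.im)) * F2 + (e.re*ξ.im + e.im*ξ.re) * F3
  refine ⟨R / α + 1, by positivity, ?_⟩
  intro t x hx hinf y hy z hz
  obtain ⟨hzs, hzb⟩ := hz
  subst hx
  have ht : R / α + 1 ≤ |t| := by
    have h1 : Metric.infDist (c + (t:ℂ)*e) (closedBall c R) ≤ dist (c + (t:ℂ)*e) c :=
      Metric.infDist_le_dist_of_mem (mem_closedBall_self hR.le)
    have h2 : dist (c + (t:ℂ)*e) c = |t| := by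
      rw [dist_eq_norm]
      simp [he, Complex.norm_real]
    linarith [hinf.trans h1, h2]
  have ht2 : (R / α + 1)^2 ≤ t^2 := by
    nlinarith [abs_nonneg t, sq_abs t, div_pos hR hα]
  have hy2 : (y.re - c.re)^2 + (y.im - c.im)^2 ≤ R^2 := by
    have h := mem_closedBall.mp hy
    rw [dist_eq_norm] at h
    have h3 := hns (y - c)
    simp only [Complex.sub_re, Complex.sub_im] at h3
    nlinarith [norm_nonneg (y - c)]
  have hz2 : (z.re - c.re)^2 + (z.im - c.im)^2 ≤ R^2 := by
    have h := mem_closedBall.mp hzb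
    rw [dist_eq_norm] at h
    have h3 := hns (z - c)
    simp only [Complex.sub_re, Complex.sub_im] at h3
    nlinarith [norm_nonneg (z - c)]
  have hsph2 : ‖z - (c + (t:ℂ)*e)‖^2 = ‖(c + (t:ℂ)*e) - y‖^2 := by
    rw [← dist_eq_norm, ← dist_eq_norm, hzs]
  rw [hns, hns] at hsph2
  simp only [Complex.sub_re, Complex.add_re, Complex.mul_re, Complex.ofReal_re,
    Complex.ofReal_im, Complex.sub_im, Complex.add_im, Complex.mul_im, zero_mul,
    sub_zero, zero_add, mul_zero, add_zero] at hsph2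
  have hkey : ((z.re - y.re) * e.re + (z.im - y.im) * e.im) * (2 * t)
      = (z.re - y.re) * ((z.re - c.re) + (y.re - c.re))
        + (z.im - y.im) * ((z.im - c.im) + (y.im - c.im)) := by
    linear_combination -hsph2
  have hA2 : ((z.re - y.re) * e.re + (z.im - y.im) * e.im)^2
      ≤ α^2 * ((z.re - y.re)^2 + (z.im - y.im)^2) :=
    aux_arith α R t (z.re - y.re) (z.im - y.im) (z.re - c.re) (z.im - c.im)
      (y.re - c.re) (y.im - c.im) _ hα hR hz2 hy2 hkey ht
  set B : ℝ := (z.re - y.re) * ξ.re + (z.im - y.im) * ξ.im with hB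
  have hmem : (B : ℝ) • ξ ∈ ((Submodule.span ℝ {ξ} : Submodule ℝ ℂ) : Set ℂ) :=
    Submodule.smul_mem _ _ (Submodule.mem_span_singleton_self ξ)
  have h4 : Metric.infDist (z - y) ((Submodule.span ℝ {ξ} : Submodule ℝ ℂ) : Set ℂ)
      ≤ dist (z - y) ((B : ℝ) • ξ) := Metric.infDist_le_dist_of_mem hmem
  refine h4.trans ?_
  rw [dist_eq_norm, dist_eq_norm]
  have hsq : ‖(z - y) - (B : ℝ) • ξ‖^2 ≤ (α * ‖z - y‖)^2 := by
    have h5 := hns ((z - y) - (B : ℝ) • ξ)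
    have h6 := hns (z - y)
    simp only [Complex.sub_re, Complex.sub_im, Complex.real_smul, Complex.mul_re,
      Complex.mul_im, Complex.ofReal_re, Complex.ofReal_im, zero_mul, sub_zero,
      zero_add, mul_zero, add_zero] at h5 h6
    rw [Complex.real_smul, h5, mul_pow, h6, hB]
    have hfull : (z.re - y.re)^2 + (z.im - y.im)^2
        = ((z.re - y.re) * e.re + (z.im - y.im) * e.im)^2
          + ((z.re - y.re) * ξ.re + (z.im - y.im) * ξ.im)^2 := by
      linear_combination (-(z.re - y.re)^2) * ha2 + (-(z.im - y.im)^2) * hb2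
        + (-2*(z.re - y.re)*(z.im - y.im)) * hab
    have hcomp : (z.re - y.re - ((z.re - y.re) * ξ.re + (z.im - y.im) * ξ.im) * ξ.re)^2
        + (z.im - y.im - ((z.re - y.re) * ξ.re + (z.im - y.im) * ξ.im) * ξ.im)^2
        = ((z.re - y.re) * e.re + (z.im - y.im) * e.im)^2 := by
      linear_combination hfull + ((z.re - y.re) * ξ.re + (z.im - y.im) * ξ.im)^2 * F2
    calc (z.re - y.re - ((z.re - y.re) * ξ.re + (z.im - y.im) * ξ.im) * ξ.re)^2
        + (z.im - y.im - ((z.re - y.re) * ξ.re + (z.im - y.im) * ξ.im) * ξ.im)^2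
        = ((z.re - y.re) * e.re + (z.im - y.im) * e.im)^2 := hcomp
      _ ≤ α^2 * ((z.re - y.re)^2 + (z.im - y.im)^2) := hA2
  have h7 := Real.sqrt_le_sqrt hsq
  rwa [Real.sqrt_sq (norm_nonneg _), Real.sqrt_sq (by positivity)] at h7
end
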